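/- For each choice of sign, let β_h^± = ((R_h − 1) ± √((R_h − 1)² + 4 ρ^{2h} 2^h)) / (2 ρ^h 2^h) and λ_h^± = 1 + β_h^± 2^h ρ^h. Then the vector on {root} ∪ {0,1}^h whose root coordinate is 1 and whose leaf coordinates are all equal to β_h^± is an eigenvector of the augmented covariance matrix Σ_*^{(h)} with eigenvalue λ_h^±; moreover λ_h^+ λ_h^- = R_h − (2ρ²)^h. -/

import Mathlib

open Finset

/-- Length of the longest common prefix of two binary strings of length `h`
(equal to `h` when the strings coincide). -/
def lcpLen (h : ℕ) (s t : Fin h → Bool) : ℕ :=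
  (Finset.univ.filter (fun i : Fin h => ∀ j : Fin h, j ≤ i → s j = t j)).card

/-- Tree distance between two leaves of the `h`-level balanced binary tree. -/
def treeDist (h : ℕ) (s t : Fin h → Bool) : ℕ :=
  2 * (h - lcpLen h s t)

/-- `R_h = 1 + Σ_{l=1}^{h} ρ^{2l} 2^{l−1}`. -/
noncomputable def Rh (h : ℕ) (ρ : ℝ) : ℝ :=
  1 + ∑ l ∈ Finset.range h, ρ ^ (2 * (l + 1)) * 2 ^ l

/-- Augmented covariance matrix `Σ_*^{(h)}`, indexed by `{root} ∪ {0,1}^h`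
(`none` is the root): it agrees with `Σ^{(h)}` on pairs of leaves, has diagonal
root entry `1`, and entries `ρ^h` between the root and every leaf. -/
noncomputable def SigmaStar (h : ℕ) (ρ : ℝ) :
    Matrix (Option (Fin h → Bool)) (Option (Fin h → Bool)) ℝ :=
  fun u v =>
    match u, v with
    | none, none => 1
    | none, some _ => ρ ^ h
    | some _, none => ρ ^ h
    | some s, some t => ρ ^ treeDist h s t

/-- `β_h^±`, encoded via a sign `σ ∈ {1, −1}`. -/
noncomputable def betaPM (h : ℕ) (ρ σ : ℝ) : ℝ :=
  ((Rh h ρ - 1) + σ * Real.sqrt ((Rh h ρ - 1) ^ 2 + 4 * ρ ^ (2 * h) * 2 ^ h)) /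
    (2 * ρ ^ h * 2 ^ h)

/-- `λ_h^± = 1 + β_h^± 2^h ρ^h`. -/
noncomputable def lamPM (h : ℕ) (ρ σ : ℝ) : ℝ :=
  1 + betaPM h ρ σ * 2 ^ h * ρ ^ h

lemma lcpLen_cons_ne (h : ℕ) (a b : Bool) (s t : Fin h → Bool) (hab : a ≠ b) :
    lcpLen (h+1) (Fin.cons a s) (Fin.cons b t) = 0 := by
  rw [lcpLen, Finset.card_eq_zero, Finset.filter_eq_empty_iff]
  intro i _
  intro H
  have := H 0 i.zero_le
  simp only [Fin.cons_zero] at this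
  exact hab this

lemma lcpLen_cons_eq (h : ℕ) (a : Bool) (s t : Fin h → Bool) :
    lcpLen (h+1) (Fin.cons a s) (Fin.cons a t) = lcpLen h s t + 1 := by
  have key : ∀ i : Fin h,
      (∀ j : Fin (h+1), j ≤ i.succ →
          (Fin.cons a s : Fin (h+1) → Bool) j = (Fin.cons a t : Fin (h+1) → Bool) j) ↔
      (∀ j : Fin h, j ≤ i → s j = t j) := by
    intro i
    constructor
    · intro H j hj
      have := H j.succ (by simpa [Fin.succ_le_succ_iff] using hj)
      simpa using this
    · intro H j
      refine Fin.cases ?_ (fun j' => ?_) j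
      · intro _; simp
      · intro hj'
        simp only [Fin.cons_succ]
        exact H j' (by simpa [Fin.succ_le_succ_iff] using hj')
  rw [lcpLen, Finset.card_filter, Fin.sum_univ_succ]
  have h0 : (∀ j : Fin (h+1), j ≤ (0 : Fin (h+1)) →
      (Fin.cons a s : Fin (h+1) → Bool) j = (Fin.cons a t : Fin (h+1) → Bool) j) := by
    intro j hj
    rw [Fin.le_zero_iff] at hj
    subst hj; simp
  rw [if_pos h0]
  have : ∀ i : Fin h,
      (if (∀ j : Fin (h+1), j ≤ i.succ →
          (Fin.cons a s : Fin (h+1) → Bool) j = (Fin.cons a t : Fin (h+1) → Bool) j) then 1 else 0)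
        = (if (∀ j : Fin h, j ≤ i → s j = t j) then (1:ℕ) else 0) := by
    intro i; simp [key i]
  rw [Finset.sum_congr rfl (fun i _ => this i), lcpLen, Finset.card_filter]
  ring

lemma rowSum (ρ : ℝ) (h : ℕ) (s : Fin h → Bool) :
    ∑ t : Fin h → Bool, ρ ^ treeDist h s t = Rh h ρ := by
  induction h with
  | zero => simp [treeDist, Rh]
  | succ h ih =>
    have hs : s = Fin.cons (s 0) (Fin.tail s) := (Fin.cons_self_tail s).symm
    rw [hs]
    rw [← Fintype.sum_equiv (Fin.consEquiv (fun _ : Fin (h+1) => Bool))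
        (fun p : Bool × (Fin h → Bool) =>
          ρ ^ treeDist (h+1) (Fin.cons (s 0) (Fin.tail s)) (Fin.cons p.1 p.2))
        (fun t => ρ ^ treeDist (h+1) (Fin.cons (s 0) (Fin.tail s)) t)
        (fun p => rfl)]
    rw [Fintype.sum_prod_type]
    have hsum : ∀ b : Bool,
        ∑ t' : Fin h → Bool, ρ ^ treeDist (h+1) (Fin.cons (s 0) (Fin.tail s)) (Fin.cons b t')
          = if b = s 0 then Rh h ρ else 2 ^ h * ρ ^ (2 * (h + 1)) := by
      intro b
      by_cases hb : b = s 0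
      · subst hb
        rw [if_pos rfl]
        rw [← ih (Fin.tail s)]
        refine Finset.sum_congr rfl fun t' _ => ?_
        rw [treeDist, treeDist, lcpLen_cons_eq]
        congr 1
        omega
      · rw [if_neg hb]
        have : ∀ t' : Fin h → Bool,
            treeDist (h+1) (Fin.cons (s 0) (Fin.tail s)) (Fin.cons b t') = 2 * (h + 1) := by
          intro t'
          rw [treeDist, lcpLen_cons_ne h _ _ _ _ (fun e => hb e.symm)]
          omega
        rw [Finset.sum_congr rfl fun t' _ => by rw [this t']]
        simp [Finset.card_univ]
    rw [Fintype.sum_bool, hsum true, hsum false]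
    have : Rh (h+1) ρ = Rh h ρ + ρ ^ (2 * (h + 1)) * 2 ^ h := by
      rw [Rh, Rh, Finset.sum_range_succ]; ring
    rw [this]
    cases hs0 : s 0 <;> simp <;> ring

lemma quad_aux (h : ℕ) (ρ σ : ℝ) (hρ0 : 0 < ρ) (hσ2 : σ ^ 2 = 1) :
    ρ ^ h + betaPM h ρ σ * Rh h ρ = lamPM h ρ σ * betaPM h ρ σ := by
  have hρh : (0:ℝ) < ρ ^ h := pow_pos hρ0 h
  have h2h : (0:ℝ) < (2:ℝ) ^ h := by positivity
  have hD : (0:ℝ) ≤ (Rh h ρ - 1) ^ 2 + 4 * ρ ^ (2 * h) * 2 ^ h := by positivity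
  have hsq : Real.sqrt ((Rh h ρ - 1) ^ 2 + 4 * ρ ^ (2 * h) * 2 ^ h) ^ 2
      = (Rh h ρ - 1) ^ 2 + 4 * ρ ^ (2 * h) * 2 ^ h := Real.sq_sqrt hD
  have hpow : ρ ^ (2 * h) = (ρ ^ h) ^ 2 := by rw [← pow_mul]; ring_nf
  rw [lamPM, betaPM]
  set R := Rh h ρ
  set b := Real.sqrt ((R - 1) ^ 2 + 4 * ρ ^ (2 * h) * 2 ^ h)
  rw [hpow] at hsq
  field_simp
  linear_combination (-1) * hsq + (-b^2) * hσ2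

lemma prod_aux (h : ℕ) (ρ : ℝ) (hρ0 : 0 < ρ) :
    lamPM h ρ 1 * lamPM h ρ (-1) = Rh h ρ - (2 * ρ ^ 2) ^ h := by
  have hρh : (0:ℝ) < ρ ^ h := pow_pos hρ0 h
  have h2h : (0:ℝ) < (2:ℝ) ^ h := by positivity
  have hD : (0:ℝ) ≤ (Rh h ρ - 1) ^ 2 + 4 * ρ ^ (2 * h) * 2 ^ h := by positivity
  have hsq : Real.sqrt ((Rh h ρ - 1) ^ 2 + 4 * ρ ^ (2 * h) * 2 ^ h) ^ 2
      = (Rh h ρ - 1) ^ 2 + 4 * ρ ^ (2 * h) * 2 ^ h := Real.sq_sqrt hD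
  have hpow : ρ ^ (2 * h) = (ρ ^ h) ^ 2 := by rw [← pow_mul]; ring_nf
  have hmul : ((2:ℝ) * ρ ^ 2) ^ h = 2 ^ h * (ρ ^ h) ^ 2 := by
    rw [mul_pow, ← pow_mul, ← pow_mul]; ring_nf
  rw [lamPM, lamPM, betaPM, betaPM]
  set R := Rh h ρ
  set b := Real.sqrt ((R - 1) ^ 2 + 4 * ρ ^ (2 * h) * 2 ^ h)
  rw [hpow] at hsq
  rw [hmul]
  field_simp
  linear_combination (-1) * hsq

/-- For each sign, the vector `(1, β_h^± 𝟏)` is an eigenvector of the augmented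
covariance matrix `Σ_*^{(h)}` with eigenvalue `λ_h^±`; moreover
`λ_h^+ λ_h^- = R_h − (2ρ²)^h`. -/
theorem augmented_eigenvectors (h : ℕ) (ρ : ℝ) (hρ : ρ ∈ Set.Ioo (0:ℝ) 1) :
    (∀ σ : ℝ, σ = 1 ∨ σ = -1 →
        (SigmaStar h ρ).mulVec (fun u => Option.elim u 1 fun _ => betaPM h ρ σ) =
          lamPM h ρ σ •
            (fun u : Option (Fin h → Bool) => Option.elim u 1 fun _ => betaPM h ρ σ)) ∧
    lamPM h ρ 1 * lamPM h ρ (-1) = Rh h ρ - (2 * ρ ^ 2) ^ h := by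
  obtain ⟨hρ0, hρ1⟩ := hρ
  constructor
  · intro σ hσ
    have hσ2 : σ ^ 2 = 1 := by rcases hσ with rfl | rfl <;> norm_num
    funext u
    cases u with
    | none =>
      show ∑ v, SigmaStar h ρ none v * (Option.elim v 1 fun _ => betaPM h ρ σ)
          = lamPM h ρ σ * 1
      rw [Fintype.sum_option]
      simp only [SigmaStar, Option.elim]
      rw [Finset.sum_const, Finset.card_univ]
      simp only [Fintype.card_fun, Fintype.card_bool, Fintype.card_fin]
      rw [lamPM]
      ring
    | some s =>
      show ∑ v, SigmaStar h ρ (some s) v * (Option.elim v 1 fun _ => betaPM h ρ σ)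
          = lamPM h ρ σ * betaPM h ρ σ
      rw [Fintype.sum_option]
      simp only [SigmaStar, Option.elim]
      rw [← Finset.sum_mul, rowSum ρ h s, mul_one, mul_comm]
      exact quad_aux h ρ σ hρ0 hσ2
  · exact prod_aux h ρ hρ0
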